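/- Let n ≥ 2 and k = ⌊log₂ n⌋. The sequence (1, 2, 4, ..., 2^{k−1}) in Z_n is not a {1, −1}-weighted Davenport Z-sequence: there is no tuple (a_1,...,a_k) ∈ {−1, 0, 1}^k, not all zero, with ∑_i a_i 2^{i−1} ≡ 0 (mod n). -/
import Mathlib

lemma two_geom_sum (k : ℕ) : ∑ i ∈ Finset.range k, (2:ℤ) ^ i = 2 ^ k - 1 := by
  induction k with
  | zero => simp
  | succ m ih => rw [Finset.sum_range_succ, ih]; ring

lemma pm_sum_abs_le (k : ℕ) (a : Fin k → ℤ) (h : ∀ i, |a i| ≤ 1) :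
    |∑ i, a i * 2 ^ (i : ℕ)| ≤ 2 ^ k - 1 := by
  calc |∑ i, a i * 2 ^ (i : ℕ)| ≤ ∑ i, |a i * 2 ^ (i : ℕ)| :=
        Finset.abs_sum_le_sum_abs _ _
    _ ≤ ∑ i : Fin k, 2 ^ (i : ℕ) := by
        apply Finset.sum_le_sum
        intro i _
        rw [abs_mul, abs_pow]
        calc |a i| * |(2:ℤ)| ^ (i:ℕ) ≤ 1 * |(2:ℤ)| ^ (i:ℕ) := by
              apply mul_le_mul_of_nonneg_right (h i) (by positivity)
          _ = 2 ^ (i:ℕ) := by norm_num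
    _ = 2 ^ k - 1 := by
        rw [Fin.sum_univ_eq_sum_range, two_geom_sum]

lemma pm_sum_ne_zero (k : ℕ) (a : Fin k → ℤ)
    (h : ∀ i, a i = -1 ∨ a i = 0 ∨ a i = 1) (hne : ∃ i, a i ≠ 0) :
    ∑ i, a i * 2 ^ (i : ℕ) ≠ 0 := by
  induction k with
  | zero => obtain ⟨i, _⟩ := hne; exact absurd i.2 (by omega)
  | succ k ih =>
    rw [Fin.sum_univ_castSucc]
    simp only [Fin.coe_castSucc, Fin.val_last]
    by_cases hl : a (Fin.last k) = 0
    · rw [hl, zero_mul, add_zero]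
      apply ih (fun i => a i.castSucc) (fun i => h _)
      obtain ⟨i, hi⟩ := hne
      rcases Fin.eq_castSucc_or_eq_last i with ⟨j, rfl⟩ | rfl
      · exact ⟨j, hi⟩
      · exact absurd hl hi
    · intro hsum
      have hb : |∑ i : Fin k, a i.castSucc * 2 ^ (i : ℕ)| ≤ 2 ^ k - 1 := by
        apply pm_sum_abs_le
        intro i
        rcases h i.castSucc with h' | h' | h' <;> rw [h'] <;> norm_num
      have hal : |a (Fin.last k)| = 1 := by
        rcases h (Fin.last k) with h' | h' | h' <;> rw [h'] <;> simp_all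
      have : |a (Fin.last k) * 2 ^ k| = 2 ^ k := by
        rw [abs_mul, hal, one_mul, abs_pow]; norm_num
      have heq : a (Fin.last k) * 2 ^ k = -∑ i : Fin k, a i.castSucc * 2 ^ (i : ℕ) := by
        linarith
      rw [heq, abs_neg] at this
      have : (2:ℤ)^k ≤ 2^k - 1 := this ▸ hb
      have : (0:ℤ) < 2 ^ k := by positivity
      linarith

theorem powers_of_two_not_pm_one_weighted_davenport (n : ℕ) (hn : 2 ≤ n) (k : ℕ)
    (hk : k = Nat.log 2 n) :
    ¬ ∃ a : Fin k → ℤ, (∀ i, a i = -1 ∨ a i = 0 ∨ a i = 1) ∧ (∃ i, a i ≠ 0) ∧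
      (n : ℤ) ∣ ∑ i, a i * 2 ^ (i : ℕ) := by
  rintro ⟨a, ha, hne, hdvd⟩
  have hb : |∑ i, a i * 2 ^ (i : ℕ)| ≤ 2 ^ k - 1 := by
    apply pm_sum_abs_le
    intro i
    rcases ha i with h' | h' | h' <;> rw [h'] <;> norm_num
  have hpow : 2 ^ k ≤ n := by
    rw [hk]; exact Nat.pow_log_le_self 2 (by omega)
  have hlt : |∑ i, a i * 2 ^ (i : ℕ)| < (n : ℤ) := by
    have : (2:ℤ) ^ k ≤ (n : ℤ) := by exact_mod_cast hpow
    linarith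
  have := Int.eq_zero_of_abs_lt_dvd hdvd hlt
  exact pm_sum_ne_zero k a ha hne this
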